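/- arXiv:2302.08279 — 2 statements merged into one kernel-verified Lean document; each statement's English description precedes it below -/
import Mathlib

section
/- Let ξ be the output of the Deodhar minimal lift procedure with inputs p, Y, w (with {w_1,...,w_p} ≤ Y). Then for i ≠ p with w_i < w_{i+1}, we have ξ_i < ξ_{i+1}; equivalently Des(ξ) ⊆ Des(w) ∪ {p}. Moreover, if w' is another permutation with w'_i = w_i for all i ≤ N and {w'_1,...,w'_p} ≤ Y, and ξ' is the output for inputs p, Y, w', then ξ'_i = ξ_i for all i ≤ N. -/
/-- Dominance order on equal-cardinality finite sets of naturals: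
the i-th smallest element of `E` is at most the i-th smallest element of `F`. -/
def Dom (E F : Finset ℕ) : Prop :=
  List.Forall₂ (· ≤ ·) (Finset.sort E (· ≤ ·)) (Finset.sort F (· ≤ ·))

/-- The k-th smallest element of `E` (1-based), with junk value 0 out of range. -/
def nth (E : Finset ℕ) (k : ℕ) : ℕ := (Finset.sort E (· ≤ ·)).getD (k - 1) 0

/-- The (0-based) level of `e` in `E`: its index in the increasing enumeration. -/
def level (e : ℕ) (E : Finset ℕ) : ℕ := List.idxOf e (Finset.sort E (· ≤ ·))

/-- The Bruhat order, via the tableau criterion, on permutations of `[n] = {1,...,n}`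
given in one-line notation as functions `ℕ → ℕ`. -/
def Bruhat (n : ℕ) (v w : ℕ → ℕ) : Prop :=
  ∀ i ≤ n, Dom ((Finset.Icc 1 i).image v) ((Finset.Icc 1 i).image w)

/-- `MinLift n p Y w ξ` says that `ξ` (in one-line notation, as a function `ℕ → ℕ`) is
produced by the Deodhar minimal lift procedure from inputs `p`, `Y`, `w`:
for `j ≤ p`, `ξ_j` is the least element of `Y \ {ξ_1,...,ξ_{j-1}}` that is `≥ w_j`;
for `p < j ≤ n`, `ξ_j` is the output of the subroutine applied with
`A = {w_1,...,w_{j-1}}`, `B = {ξ_1,...,ξ_{j-1}}`, `γ = w_j` (so `A ∪ {γ} = {w_1,...,w_j}`):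
`q` is maximal in `{1,...,j}` with `ã'_q > b̃_{q-1}` (with `b̃_0 = 0`, so `q = 1` qualifies
vacuously), and `ξ_j = ã'_q`. -/
def MinLift (n p : ℕ) (Y : Finset ℕ) (w ξ : ℕ → ℕ) : Prop :=
  (∀ j, 1 ≤ j → j ≤ p →
    ((Y \ ((Finset.Icc 1 (j - 1)).image ξ)).filter (fun y => w j ≤ y)).min = (ξ j : WithTop ℕ)) ∧
  (∀ j, p < j → j ≤ n → ∃ q, 1 ≤ q ∧ q ≤ j ∧
    (q = 1 ∨ nth ((Finset.Icc 1 j).image w) q > nth ((Finset.Icc 1 (j - 1)).image ξ) (q - 1)) ∧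
    (∀ r, q < r → r ≤ j →
      nth ((Finset.Icc 1 j).image w) r ≤ nth ((Finset.Icc 1 (j - 1)).image ξ) (r - 1)) ∧
    ξ j = nth ((Finset.Icc 1 j).image w) q)

namespace Aux

lemma sorted_get_le (l : List ℕ) (hs : List.Pairwise (· < ·) l) (a b : Fin l.length)
    (hab : a ≤ b) : l.get a ≤ l.get b := by
  rcases lt_or_eq_of_le hab with h | h
  · exact le_of_lt (hs.rel_get_of_lt h)
  · exact le_of_eq (congrArg l.get h)

lemma nth_eq_get (E : Finset ℕ) (k : ℕ) (hk : k ≤ E.card) (hk1 : 1 ≤ k) :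
    nth E k = (Finset.sort E (· ≤ ·)).get ⟨k - 1, by rw [Finset.length_sort]; omega⟩ :=
  List.getD_eq_get (Finset.sort E (· ≤ ·)) 0 ⟨k - 1, by rw [Finset.length_sort]; omega⟩

lemma nth_mem (E : Finset ℕ) (k : ℕ) (hk1 : 1 ≤ k) (hk : k ≤ E.card) : nth E k ∈ E := by
  rw [nth_eq_get E k hk hk1, ← Finset.mem_sort (· ≤ ·)]
  exact List.get_mem _ _

lemma nth_lt_nth (E : Finset ℕ) {k m : ℕ} (hk1 : 1 ≤ k) (hkm : k < m) (hm : m ≤ E.card) :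
    nth E k < nth E m := by
  rw [nth_eq_get E k (by omega) hk1, nth_eq_get E m hm (by omega)]
  exact (Finset.sortedLT_sort E).pairwise.rel_get_of_lt (by simp [Fin.lt_def]; omega)

lemma nth_le_nth (E : Finset ℕ) {k m : ℕ} (hk1 : 1 ≤ k) (hkm : k ≤ m) (hm : m ≤ E.card) :
    nth E k ≤ nth E m := by
  rcases lt_or_eq_of_le hkm with h | h
  · exact le_of_lt (nth_lt_nth E hk1 h hm)
  · rw [h]

/-- Dir1 -/
lemma le_card_filter (E : Finset ℕ) {k t : ℕ} (hk1 : 1 ≤ k) (hk : k ≤ E.card)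
    (h : nth E k ≤ t) : k ≤ (E.filter (· ≤ t)).card := by
  have hinj : ∀ a ∈ (Finset.Icc 1 k), nth E a ∈ E.filter (· ≤ t) := by
    intro a ha
    rw [Finset.mem_Icc] at ha
    rw [Finset.mem_filter]
    exact ⟨nth_mem E a ha.1 (le_trans ha.2 hk),
      le_trans (nth_le_nth E ha.1 ha.2 hk) h⟩
  have := Finset.card_le_card_of_injOn (nth E) hinj ?_
  · simpa using this
  · intro a ha b hb hab
    simp only [Finset.coe_Icc, Set.mem_Icc] at ha hb
    by_contra hne
    rcases Nat.lt_or_ge a b with h' | h'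
    · exact absurd hab (ne_of_lt (nth_lt_nth E ha.1 h' (le_trans hb.2 hk)))
    · have : b < a := by omega
      exact absurd hab.symm (ne_of_lt (nth_lt_nth E hb.1 this (le_trans ha.2 hk)))

/-- Dir2 -/
lemma nth_le_of_le_card (E : Finset ℕ) {k t : ℕ} (hk1 : 1 ≤ k)
    (h : k ≤ (E.filter (· ≤ t)).card) : nth E k ≤ t := by
  have hk : k ≤ E.card := le_trans h (Finset.card_filter_le E _)
  by_contra hlt
  push_neg at hlt
  -- every element of the filter has index < k-1 in the sort
  set l := Finset.sort E (· ≤ ·) with hl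
  have hcard : (E.filter (· ≤ t)).card ≤ k - 1 := by
    have := Finset.card_le_card_of_injOn (fun e => List.idxOf e l)
      (s := E.filter (· ≤ t)) (t := Finset.range (k-1)) ?_ ?_
    · simpa using this
    · intro e he
      rw [Finset.mem_coe, Finset.mem_filter] at he
      have hmem : e ∈ l := (Finset.mem_sort (· ≤ ·)).2 he.1
      have hidx : List.idxOf e l < l.length := List.idxOf_lt_length_iff.2 hmem
      rw [Finset.mem_coe, Finset.mem_range]
      by_contra hge
      push_neg at hge
      have hlen : k - 1 < l.length := by rw [Finset.length_sort]; omega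
      have : l.get ⟨k-1, hlen⟩ ≤ l.get ⟨List.idxOf e l, hidx⟩ :=
        sorted_get_le l (Finset.sortedLT_sort E).pairwise _ _ (by simpa using hge)
      rw [List.idxOf_get hidx] at this
      rw [← nth_eq_get E k hk hk1] at this
      omega
    · intro a ha b hb hab
      simp only [Finset.coe_filter, Set.mem_setOf_eq] at ha hb
      have ha' : a ∈ l := (Finset.mem_sort (· ≤ ·)).2 ha.1
      have hb' : b ∈ l := (Finset.mem_sort (· ≤ ·)).2 hb.1
      have hia := List.idxOf_get (List.idxOf_lt_length_iff.2 ha')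
      have hib := List.idxOf_get (List.idxOf_lt_length_iff.2 hb')
      simp only at hab
      rw [← hia, ← hib]
      congr 1
      exact Fin.ext hab
  omega

lemma card_filter_nth (E : Finset ℕ) {k : ℕ} (hk1 : 1 ≤ k) (hk : k ≤ E.card) :
    (E.filter (· ≤ nth E k)).card = k := by
  have h1 : k ≤ (E.filter (· ≤ nth E k)).card := le_card_filter E hk1 hk le_rfl
  rcases Nat.lt_or_ge (E.filter (· ≤ nth E k)).card (k+1) with h | h
  · omega
  · have hk' : k + 1 ≤ E.card := le_trans h (Finset.card_filter_le E _)
    have := nth_le_of_le_card E (k := k+1) (by omega) h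
    have := nth_lt_nth E hk1 (show k < k+1 by omega) hk'
    omega

lemma nth_eq_of_card_filter (E : Finset ℕ) {e k : ℕ} (he : e ∈ E)
    (h : (E.filter (· ≤ e)).card = k) : nth E k = e := by
  have hk1 : 1 ≤ k := by
    rw [← h]
    exact Finset.card_pos.2 ⟨e, Finset.mem_filter.2 ⟨he, le_refl e⟩⟩
  have hk : k ≤ E.card := by rw [← h]; exact Finset.card_filter_le E _
  have h1 : nth E k ≤ e := nth_le_of_le_card E hk1 (le_of_eq h.symm)
  -- e = nth E m for some m ≤ k
  have hm : ∃ m, 1 ≤ m ∧ m ≤ E.card ∧ nth E m = e := by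
    have hmem : e ∈ Finset.sort E (· ≤ ·) := (Finset.mem_sort (· ≤ ·)).2 he
    have hidx : List.idxOf e (Finset.sort E (· ≤ ·)) < (Finset.sort E (· ≤ ·)).length :=
      List.idxOf_lt_length_iff.2 hmem
    refine ⟨List.idxOf e (Finset.sort E (· ≤ ·)) + 1, by omega, ?_, ?_⟩
    · rw [Finset.length_sort] at hidx; omega
    · rw [nth_eq_get E _ (by rw [Finset.length_sort] at hidx; omega) (by omega)]
      have := List.idxOf_get hidx
      simp only [List.get_eq_getElem] at this ⊢
      convert this using 2
      omega
  obtain ⟨m, hm1, hmc, hme⟩ := hm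
  have : m ≤ (E.filter (· ≤ e)).card := le_card_filter E hm1 hmc (le_of_eq hme)
  rw [h] at this
  have := nth_le_nth E hm1 this hk
  omega

lemma lt_nth_iff (E : Finset ℕ) {k t : ℕ} (hk1 : 1 ≤ k) (hk : k ≤ E.card) :
    t < nth E k ↔ (E.filter (· ≤ t)).card < k := by
  constructor
  · intro h
    by_contra hge
    push_neg at hge
    have := nth_le_of_le_card E hk1 hge
    omega
  · intro h
    by_contra hge
    push_neg at hge
    have := le_card_filter E hk1 hk hge
    omega

lemma dom_iff_nth (E F : Finset ℕ) :
    Dom E F ↔ (E.card = F.card ∧ ∀ k, 1 ≤ k → k ≤ E.card → nth E k ≤ nth F k) := by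
  rw [Dom, List.forall₂_iff_get]
  constructor
  · rintro ⟨hlen, h⟩
    rw [Finset.length_sort, Finset.length_sort] at hlen
    refine ⟨hlen, fun k hk1 hk => ?_⟩
    rw [nth_eq_get E k hk hk1, nth_eq_get F k (by omega) hk1]
    exact h (k-1) _ _
  · rintro ⟨hlen, h⟩
    refine ⟨by rw [Finset.length_sort, Finset.length_sort, hlen], fun i h1 h2 => ?_⟩
    rw [Finset.length_sort] at h1 h2
    have := h (i+1) (by omega) (by omega)
    rw [nth_eq_get E (i+1) (by omega) (by omega),
      nth_eq_get F (i+1) (by omega) (by omega)] at this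
    simpa using this

lemma dom_iff_card (E F : Finset ℕ) (hc : E.card = F.card) :
    Dom E F ↔ ∀ t, (F.filter (· ≤ t)).card ≤ (E.filter (· ≤ t)).card := by
  rw [dom_iff_nth]
  constructor
  · rintro ⟨-, h⟩ t
    set k := (F.filter (· ≤ t)).card with hkdef
    rcases Nat.eq_zero_or_pos k with h0 | hpos
    · omega
    · have hkF : k ≤ F.card := Finset.card_filter_le F _
      have h1 : nth F k ≤ t := nth_le_of_le_card F hpos le_rfl
      have h2 : nth E k ≤ nth F k := h k hpos (by omega)
      exact le_card_filter E hpos (by omega) (le_trans h2 h1)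
  · intro h
    refine ⟨hc, fun k hk1 hk => ?_⟩
    have h1 : k ≤ (F.filter (· ≤ nth F k)).card :=
      le_card_filter F hk1 (by omega) le_rfl
    exact nth_le_of_le_card E hk1 (le_trans h1 (h _))

end Aux
namespace Aux

lemma step2 {A B : Finset ℕ} {j q : ℕ} (hA : A.card = j) (hB : B.card = j - 1)
    (hq1 : 1 ≤ q) (hqj : q ≤ j)
    (halt : q = 1 ∨ nth B (q-1) < nth A q)
    (hmax : ∀ r, q < r → r ≤ j → nth A r ≤ nth B (r-1)) :
    nth A q ∉ B ∧ (B.filter (· ≤ nth A q)).card = q - 1 ∧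
      nth (insert (nth A q) B) q = nth A q := by
  set x := nth A q with hx
  have hj1 : 1 ≤ j := le_trans hq1 hqj
  have hle : (B.filter (· ≤ x)).card ≤ q - 1 := by
    by_contra hgt
    push_neg at hgt
    have hq' : q ≤ (B.filter (· ≤ x)).card := by omega
    have hqB : q ≤ B.card := le_trans hq' (Finset.card_filter_le B _)
    have h1 : nth B q ≤ x := nth_le_of_le_card B hq1 hq'
    have h2 : nth A (q+1) ≤ nth B ((q+1)-1) := hmax (q+1) (by omega) (by omega)
    have h3 : nth A q < nth A (q+1) := nth_lt_nth A hq1 (by omega) (by omega)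
    simp only [Nat.add_sub_cancel] at h2
    omega
  have hge : q - 1 ≤ (B.filter (· ≤ x)).card := by
    rcases Nat.lt_or_ge q 2 with hq2 | hq2
    · omega
    · rcases halt with h1 | h1
      · omega
      · exact le_card_filter B (by omega) (by omega) (le_of_lt h1)
  have hcf : (B.filter (· ≤ x)).card = q - 1 := le_antisymm hle hge
  have hnot : x ∉ B := by
    intro hmem
    have heq := nth_eq_of_card_filter B hmem hcf
    rcases halt with h1 | h1
    · have : 1 ≤ (B.filter (· ≤ x)).card :=
        Finset.card_pos.2 ⟨x, Finset.mem_filter.2 ⟨hmem, le_refl x⟩⟩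
      omega
    · omega
  refine ⟨hnot, hcf, ?_⟩
  apply nth_eq_of_card_filter (insert x B) (Finset.mem_insert_self x B)
  rw [Finset.filter_insert, if_pos (le_refl x),
    Finset.card_insert_of_notMem (fun h => hnot (Finset.mem_filter.1 h).1)]
  omega

lemma dom_step {E B : Finset ℕ} {g j q : ℕ} (hE : E.card = j - 1) (hg : g ∉ E)
    (hB : B.card = j - 1)
    (hdom : Dom E B)
    (hq1 : 1 ≤ q) (hqj : q ≤ j)
    (halt : q = 1 ∨ nth B (q-1) < nth (insert g E) q)
    (hmax : ∀ r, q < r → r ≤ j → nth (insert g E) r ≤ nth B (r-1)) :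
    Dom (insert g E) (insert (nth (insert g E) q) B) := by
  have hj1 : 1 ≤ j := le_trans hq1 hqj
  set A := insert g E with hAdef
  have hA : A.card = j := by rw [Finset.card_insert_of_notMem hg]; omega
  set x := nth A q with hx
  obtain ⟨hnot, hcf, -⟩ := step2 hA hB hq1 hqj halt hmax
  have hcards : A.card = (insert x B).card := by
    rw [Finset.card_insert_of_notMem hnot]; omega
  rw [dom_iff_card _ _ hcards]
  intro t
  have hEB := (dom_iff_card E B (by omega)).1 hdom t
  have hEA : (E.filter (· ≤ t)).card ≤ (A.filter (· ≤ t)).card :=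
    Finset.card_le_card (Finset.filter_subset_filter _ (Finset.subset_insert g E))
  rcases Nat.lt_or_ge t x with hlt | hge
  · rw [Finset.filter_insert, if_neg (by omega)]
    exact le_trans hEB hEA
  · rw [Finset.filter_insert, if_pos hge,
      Finset.card_insert_of_notMem (fun h => hnot (Finset.mem_filter.1 h).1)]
    have hq_le : q ≤ (A.filter (· ≤ t)).card :=
      le_card_filter A hq1 (by omega) (le_trans (le_of_eq rfl) hge)
    rcases Nat.lt_or_ge (B.filter (· ≤ t)).card q with hc | hc
    · omega
    · set c := (B.filter (· ≤ t)).card with hcdef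
      have hcB : c ≤ B.card := Finset.card_filter_le B _
      have h1 : nth B c ≤ t := nth_le_of_le_card B (by omega) le_rfl
      have h2 : nth A (c+1) ≤ nth B ((c+1)-1) := hmax (c+1) (by omega) (by omega)
      simp only [Nat.add_sub_cancel] at h2
      have h3 := le_card_filter A (k := c+1) (by omega) (by omega) (le_trans h2 h1)
      omega

lemma Icc_one_succ (j : ℕ) (hj : 1 ≤ j) :
    Finset.Icc 1 j = insert j (Finset.Icc 1 (j-1)) := by
  ext a
  simp only [Finset.mem_Icc, Finset.mem_insert]
  omega

lemma image_succ (f : ℕ → ℕ) (j : ℕ) (hj : 1 ≤ j) :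
    (Finset.Icc 1 j).image f = insert (f j) ((Finset.Icc 1 (j-1)).image f) := by
  rw [Icc_one_succ j hj, Finset.image_insert]

lemma card_image_w {n : ℕ} {w : ℕ → ℕ} (hw : Set.BijOn w (Set.Icc 1 n) (Set.Icc 1 n))
    {j : ℕ} (hj : j ≤ n) : ((Finset.Icc 1 j).image w).card = j := by
  rw [Finset.card_image_of_injOn, Nat.card_Icc]
  · omega
  · intro a ha b hb hab
    simp only [Finset.coe_Icc, Set.mem_Icc] at ha hb
    exact hw.injOn ⟨ha.1, le_trans ha.2 hj⟩ ⟨hb.1, le_trans hb.2 hj⟩ hab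

lemma w_notmem {n : ℕ} {w : ℕ → ℕ} (hw : Set.BijOn w (Set.Icc 1 n) (Set.Icc 1 n))
    {j : ℕ} (hj1 : 1 ≤ j) (hj : j ≤ n) : w j ∉ (Finset.Icc 1 (j-1)).image w := by
  intro h
  obtain ⟨a, ha, hae⟩ := Finset.mem_image.1 h
  rw [Finset.mem_Icc] at ha
  have := hw.injOn (Set.mem_Icc.2 ⟨ha.1, by omega⟩) (Set.mem_Icc.2 ⟨hj1, hj⟩) hae
  omega

end Aux
namespace Aux

lemma invariant {n p : ℕ} {Y : Finset ℕ} {w ξ : ℕ → ℕ}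
    (hw : Set.BijOn w (Set.Icc 1 n) (Set.Icc 1 n))
    (hYc : Y.card = p)
    (hdom : Dom ((Finset.Icc 1 p).image w) Y)
    (hξ : MinLift n p Y w ξ) :
    ∀ j, j ≤ n → ((Finset.Icc 1 j).image ξ).card = j ∧
      (j ≤ p → (Finset.Icc 1 j).image ξ ⊆ Y) ∧
      (p ≤ j → Dom ((Finset.Icc 1 j).image w) ((Finset.Icc 1 j).image ξ)) := by
  intro j
  induction j with
  | zero =>
    intro _
    rw [show Finset.Icc 1 0 = ∅ from Finset.Icc_eq_empty (by omega)]
    refine ⟨by simp, by simp, fun hp0 => ?_⟩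
    simp only [Finset.image_empty]
    rw [Dom, Finset.sort_empty]
    exact List.Forall₂.nil
  | succ j ih =>
    intro hjn
    have ihj := ih (by omega)
    have hins : (Finset.Icc 1 (j+1)).image ξ
        = insert (ξ (j+1)) ((Finset.Icc 1 j).image ξ) := by
      have := image_succ ξ (j+1) (by omega)
      simpa using this
    rcases Nat.lt_or_ge p (j+1) with hpj | hpj
    · -- phase 2
      obtain ⟨q, hq1, hqj, halt, hmax, hval⟩ := hξ.2 (j+1) hpj hjn
      simp only [Nat.add_sub_cancel] at halt hmax
      set A := (Finset.Icc 1 (j+1)).image w with hAdef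
      set B := (Finset.Icc 1 j).image ξ with hBdef
      have hA : A.card = j + 1 := card_image_w hw hjn
      have hB : B.card = (j+1) - 1 := by simpa using ihj.1
      have halt' : q = 1 ∨ nth B (q-1) < nth A q := by
        rcases halt with h | h
        · exact Or.inl h
        · exact Or.inr h
      obtain ⟨hnot, -, -⟩ := step2 hA hB hq1 hqj halt' hmax
      rw [← hval] at hnot
      refine ⟨?_, fun h => by omega, fun _ => ?_⟩
      · rw [hins, Finset.card_insert_of_notMem hnot]
        simpa using ihj.1
      · -- Dom part
        have hwin : A = insert (w (j+1)) ((Finset.Icc 1 j).image w) := by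
          have := image_succ w (j+1) (by omega)
          simpa using this
        have hg : w (j+1) ∉ (Finset.Icc 1 j).image w := by
          have := w_notmem hw (j := j+1) (by omega) hjn
          simpa using this
        have hE : ((Finset.Icc 1 j).image w).card = (j+1) - 1 := by
          simpa using card_image_w hw (j := j) (by omega)
        have hdomj : Dom ((Finset.Icc 1 j).image w) B := ihj.2.2 (by omega)
        have hds := dom_step hE hg hB hdomj hq1 hqj (by rw [← hwin]; exact halt')
          (by rw [← hwin]; exact hmax)
        rw [hins, hval]
        rw [← hwin] at hds
        exact hds
    · -- phase 1
      have hmin := hξ.1 (j+1) (by omega) hpj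
      simp only [Nat.add_sub_cancel] at hmin
      have hmem := Finset.mem_of_min hmin
      rw [Finset.mem_filter, Finset.mem_sdiff] at hmem
      simp only [Nat.cast_id] at hmem
      have hsubY : (Finset.Icc 1 (j+1)).image ξ ⊆ Y := by
        rw [hins]
        exact Finset.insert_subset hmem.1.1 (ihj.2.1 (by omega))
      have hcard : ((Finset.Icc 1 (j+1)).image ξ).card = j + 1 := by
        rw [hins, Finset.card_insert_of_notMem hmem.1.2, ihj.1]
      refine ⟨hcard, fun _ => hsubY, fun hple => ?_⟩
      have hpeq : p = j + 1 := by omega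
      have hYeq : (Finset.Icc 1 (j+1)).image ξ = Y :=
        Finset.eq_of_subset_of_card_le hsubY (by omega)
      rw [hYeq, ← hpeq]
      exact hdom

end Aux
namespace Aux

lemma part1 {n p : ℕ} {Y : Finset ℕ} {w ξ : ℕ → ℕ}
    (hw : Set.BijOn w (Set.Icc 1 n) (Set.Icc 1 n))
    (hYc : Y.card = p)
    (hdom : Dom ((Finset.Icc 1 p).image w) Y)
    (hξ : MinLift n p Y w ξ) :
    ∀ i, 1 ≤ i → i + 1 ≤ n → i ≠ p → w i < w (i + 1) → ξ i < ξ (i + 1) := by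
  intro i hi1 hin hip hwlt
  rcases Nat.lt_or_ge i p with hltp | hgep
  · -- phase 1 : i + 1 ≤ p
    have hm1 := hξ.1 i hi1 (by omega)
    have hm2 := hξ.1 (i+1) (by omega) (by omega)
    simp only [Nat.add_sub_cancel] at hm2
    have hmem2 := Finset.mem_of_min hm2
    rw [Finset.mem_filter, Finset.mem_sdiff] at hmem2
    simp only [Nat.cast_id] at hmem2
    have hmemS : ξ (i+1) ∈ (Y \ ((Finset.Icc 1 (i-1)).image ξ)).filter (fun y => w i ≤ y) := by
      rw [Finset.mem_filter, Finset.mem_sdiff]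
      refine ⟨⟨hmem2.1.1, fun h => hmem2.1.2 ?_⟩, by omega⟩
      exact Finset.image_subset_image (Finset.Icc_subset_Icc le_rfl (by omega)) h
    have hle := Finset.min_le hmemS
    rw [hm1] at hle
    have hle' : ξ i ≤ ξ (i+1) := by simpa using hle
    have hne : ξ i ≠ ξ (i+1) := by
      intro he
      exact hmem2.1.2 (he ▸ Finset.mem_image.2 ⟨i, Finset.mem_Icc.2 ⟨hi1, le_rfl⟩, rfl⟩)
    omega
  · -- phase 2 : p < i
    have hpi : p < i := by omega
    obtain ⟨q, hq1, hqi, halt, hmax, hval⟩ := hξ.2 i hpi (by omega)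
    obtain ⟨q', hq'1, hq'i, halt', hmax', hval'⟩ := hξ.2 (i+1) (by omega) hin
    simp only [Nat.add_sub_cancel] at halt' hmax' hval'
    set A := (Finset.Icc 1 i).image w with hAdef
    set B := (Finset.Icc 1 (i-1)).image ξ with hBdef
    set A2 := (Finset.Icc 1 (i+1)).image w with hA2def
    set B2 := (Finset.Icc 1 i).image ξ with hB2def
    have inv := invariant hw hYc hdom hξ
    have hBc : B.card = i - 1 := (inv (i-1) (by omega)).1
    have hAc : A.card = i := card_image_w hw (by omega)
    have hA2c : A2.card = i + 1 := card_image_w hw hin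
    have hdomB : Dom ((Finset.Icc 1 (i-1)).image w) B := (inv (i-1) (by omega)).2.2 (by omega)
    set x := nth A q with hx
    have halt0 : q = 1 ∨ nth B (q-1) < nth A q := halt
    obtain ⟨hnot, hcfB, hins2⟩ := step2 hAc hBc hq1 hqi halt0 hmax
    have hB2 : B2 = insert x B := by
      have := image_succ ξ i hi1
      rw [hB2def, this, hval]
    have hwiA : w i ∈ A :=
      Finset.mem_image.2 ⟨i, Finset.mem_Icc.2 ⟨hi1, le_rfl⟩, rfl⟩
    have hAfx : (A.filter (· ≤ x)).card = q := card_filter_nth A hq1 (by omega)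
    have hAsub : A ⊆ Finset.Icc 1 n := by
      intro a ha
      obtain ⟨b, hb, hbe⟩ := Finset.mem_image.1 ha
      rw [Finset.mem_Icc] at hb
      have := hw.mapsTo (Set.mem_Icc.2 ⟨hb.1, by omega⟩)
      rw [Finset.mem_Icc]
      exact Set.mem_Icc.1 (hbe ▸ this)
    have hxA : x ∈ A := nth_mem A q hq1 (by omega)
    have hx1 : 1 ≤ x := (Finset.mem_Icc.1 (hAsub hxA)).1
    have hxwi : x ≤ w i := by
      by_contra hgt
      push_neg at hgt
      have hq2 : 2 ≤ q := by
        by_contra h1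
        have hq1' : q = 1 := by omega
        have h2 : 1 ≤ (A.filter (· ≤ w i)).card :=
          Finset.card_pos.2 ⟨w i, Finset.mem_filter.2 ⟨hwiA, le_rfl⟩⟩
        have := nth_le_of_le_card A (k := 1) le_rfl h2
        rw [← hq1'] at this
        omega
      have hsplit : A.filter (· ≤ x) = insert x (A.filter (· ≤ x - 1)) := by
        ext a
        simp only [Finset.mem_filter, Finset.mem_insert]
        constructor
        · rintro ⟨ha, hax⟩
          rcases Nat.eq_or_lt_of_le hax with h | h
          · exact Or.inl h
          · exact Or.inr ⟨ha, by omega⟩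
        · rintro (h | ⟨ha, hax⟩)
          · exact ⟨h ▸ hxA, h ▸ le_rfl⟩
          · exact ⟨ha, by omega⟩
      have h1 : (A.filter (· ≤ x - 1)).card = q - 1 := by
        have hxn : x ∉ A.filter (· ≤ x - 1) := by
          intro h
          have := (Finset.mem_filter.1 h).2
          omega
        have := hsplit ▸ hAfx
        rw [Finset.card_insert_of_notMem hxn] at this
        omega
      have hwA' : (Finset.Icc 1 (i-1)).image w = A.erase (w i) := by
        rw [hAdef, image_succ w i hi1,
          Finset.erase_insert (w_notmem hw hi1 (by omega))]
      have h2 : ((A.erase (w i)).filter (· ≤ x - 1)).card = q - 2 := by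
        rw [Finset.filter_erase,
          Finset.card_erase_of_mem (Finset.mem_filter.2 ⟨hwiA, by omega⟩), h1]
        omega
      have h3 : q - 1 ≤ (B.filter (· ≤ x - 1)).card := by
        rcases halt0 with h | h
        · omega
        · exact le_card_filter B (by omega) (by omega) (by omega)
      have h4 := (dom_iff_card _ B (by
        rw [hBc, card_image_w hw (j := i-1) (by omega)])).1 hdomB (x-1)
      rw [hwA', h2] at h4
      omega
    have hB2q : nth B2 q = x := by rw [hB2]; exact hins2
    have hA2i : A2 = insert (w (i+1)) A := by
      have := image_succ w (i+1) (by omega)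
      rw [hA2def, this]
      simp [hAdef]
    have hgn : w (i+1) ∉ A := by
      have := w_notmem hw (j := i+1) (by omega) hin
      simp only [Nat.add_sub_cancel] at this
      exact this
    have hA2fx : (A2.filter (· ≤ x)).card = q := by
      rw [hA2i, Finset.filter_insert, if_neg (by omega)]
      exact hAfx
    have hq'q : q + 1 ≤ q' := by
      by_contra hle'
      push_neg at hle'
      have h5 : nth A2 (q+1) ≤ nth B2 ((q+1)-1) := hmax' (q+1) (by omega) (by omega)
      simp only [Nat.add_sub_cancel] at h5
      rw [hB2q] at h5
      have h6 := le_card_filter A2 (k := q+1) (by omega) (by omega) h5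
      omega
    have h7 : x < nth A2 (q+1) := by
      rw [lt_nth_iff A2 (by omega) (by omega), hA2fx]
      omega
    have h8 : nth A2 (q+1) ≤ nth A2 q' := nth_le_nth A2 (by omega) hq'q (by omega)
    rw [hval, hval']
    omega

end Aux
namespace Aux

lemma part2 {n p N : ℕ} {Y : Finset ℕ} {w w' ξ ξ' : ℕ → ℕ} (hN : N ≤ n)
    (hξ : MinLift n p Y w ξ) (hξ' : MinLift n p Y w' ξ')
    (hww : ∀ i, 1 ≤ i → i ≤ N → w' i = w i) :
    ∀ i, 1 ≤ i → i ≤ N → ξ' i = ξ i := by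
  suffices h : ∀ i, i ≤ N → ∀ k, 1 ≤ k → k ≤ i → ξ' k = ξ k by
    intro i h1 h2; exact h i h2 i h1 le_rfl
  intro i
  induction i with
  | zero => intro _ k hk1 hk; omega
  | succ i ih =>
    intro hiN k hk1 hk
    rcases Nat.lt_or_ge k (i+1) with hlt | hge
    · exact ih (by omega) k hk1 (by omega)
    have hk' : k = i + 1 := by omega
    subst hk'
    have himgξ : (Finset.Icc 1 i).image ξ' = (Finset.Icc 1 i).image ξ := by
      apply Finset.image_congr
      intro a ha
      simp only [Finset.coe_Icc, Set.mem_Icc] at ha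
      exact ih (by omega) a ha.1 ha.2
    have himgw : (Finset.Icc 1 (i+1)).image w' = (Finset.Icc 1 (i+1)).image w := by
      apply Finset.image_congr
      intro a ha
      simp only [Finset.coe_Icc, Set.mem_Icc] at ha
      exact hww a ha.1 (by omega)
    rcases Nat.lt_or_ge p (i+1) with hpj | hpj
    · obtain ⟨q, hq1, hqj, halt, hmax, hval⟩ := hξ.2 (i+1) hpj (by omega)
      obtain ⟨q', hq'1, hq'j, halt', hmax', hval'⟩ := hξ'.2 (i+1) hpj (by omega)
      simp only [Nat.add_sub_cancel] at halt hmax hval halt' hmax' hval'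
      rw [himgξ, himgw] at halt' hmax'
      rw [himgw] at hval'
      have hqq : q = q' := by
        by_contra hne
        rcases Nat.lt_or_ge q q' with h | h
        · have h1 := hmax q' h hq'j
          rcases halt' with h2 | h2
          · omega
          · omega
        · have hlt2 : q' < q := by omega
          have h1 := hmax' q hlt2 hqj
          rcases halt with h2 | h2
          · omega
          · omega
      rw [hval, hval', hqq]
    · have hm := hξ.1 (i+1) (by omega) hpj
      have hm' := hξ'.1 (i+1) (by omega) hpj
      simp only [Nat.add_sub_cancel] at hm hm'
      rw [himgξ, hww (i+1) (by omega) hiN, hm] at hm'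
      have : (ξ (i+1) : WithTop ℕ) = (ξ' (i+1) : WithTop ℕ) := hm'
      exact_mod_cast this.symm

end Aux

theorem stmt18 (n p N : ℕ) (hp : p ≤ n) (hN : N ≤ n) (w w' ξ ξ' : ℕ → ℕ)
    (hw : Set.BijOn w (Set.Icc 1 n) (Set.Icc 1 n))
    (hw' : Set.BijOn w' (Set.Icc 1 n) (Set.Icc 1 n))
    (Y : Finset ℕ) (hYs : Y ⊆ Finset.Icc 1 n) (hYc : Y.card = p)
    (hdom : Dom ((Finset.Icc 1 p).image w) Y)
    (hdom' : Dom ((Finset.Icc 1 p).image w') Y)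
    (hξ : MinLift n p Y w ξ) (hξ' : MinLift n p Y w' ξ') :
    (∀ i, 1 ≤ i → i + 1 ≤ n → i ≠ p → w i < w (i + 1) → ξ i < ξ (i + 1)) ∧
    ((∀ i, 1 ≤ i → i ≤ N → w' i = w i) → ∀ i, 1 ≤ i → i ≤ N → ξ' i = ξ i) := by
  exact ⟨Aux.part1 hw hYc hdom hξ, fun hww i h1 h2 => Aux.part2 hN hξ hξ' hww i h1 h2⟩
end

section
/- The permutation ξ output by the Deodhar minimal lift procedure (inputs p, Y, w with {w_1,...,w_p} ≤ Y) satisfies: ξW_p = Y, w ≤ ξ in Bruhat order, and for any v ∈ S_n with vW_p = Y and ξ ≰ v, one has w ≰ v. Consequently ξ is the unique minimal element of {v ∈ S_n : vW_p = Y, w ≤ v}. -/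
/-- count of elements `≥ t` -/
def Cnt (t : ℕ) (E : Finset ℕ) : ℕ := (E.filter (fun x => t ≤ x)).card
/-- count of elements `< t` -/
def Blt (t : ℕ) (E : Finset ℕ) : ℕ := (E.filter (fun x => x < t)).card

lemma cnt_add_blt (t : ℕ) (E : Finset ℕ) : Cnt t E + Blt t E = E.card := by
  classical
  rw [Cnt, Blt]
  rw [show E.filter (fun x => x < t) = E.filter (fun x => ¬ t ≤ x) by
    apply Finset.filter_congr; intro x _; constructor <;> omega]
  exact Finset.card_filter_add_card_filter_not _

lemma cnt_mono_set {E F : Finset ℕ} (h : E ⊆ F) (t : ℕ) : Cnt t E ≤ Cnt t F :=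
  Finset.card_le_card (Finset.filter_subset_filter _ h)

lemma blt_mono_set {E F : Finset ℕ} (h : E ⊆ F) (t : ℕ) : Blt t E ≤ Blt t F :=
  Finset.card_le_card (Finset.filter_subset_filter _ h)

lemma cnt_anti {t t' : ℕ} (h : t ≤ t') (E : Finset ℕ) : Cnt t' E ≤ Cnt t E := by
  apply Finset.card_le_card
  intro x hx
  simp only [Finset.mem_filter] at hx ⊢
  exact ⟨hx.1, le_trans h hx.2⟩

lemma blt_anti {t t' : ℕ} (h : t ≤ t') (E : Finset ℕ) : Blt t E ≤ Blt t' E := by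
  apply Finset.card_le_card
  intro x hx
  simp only [Finset.mem_filter] at hx ⊢
  exact ⟨hx.1, lt_of_lt_of_le hx.2 h⟩

lemma cnt_insert {a : ℕ} {E : Finset ℕ} (h : a ∉ E) (t : ℕ) :
    Cnt t (insert a E) = Cnt t E + (if t ≤ a then 1 else 0) := by
  rw [Cnt, Cnt, Finset.filter_insert]
  split
  · rw [Finset.card_insert_of_notMem (fun hc => h (Finset.mem_of_mem_filter _ hc))]
  · simp

lemma blt_insert {a : ℕ} {E : Finset ℕ} (h : a ∉ E) (t : ℕ) :
    Blt t (insert a E) = Blt t E + (if a < t then 1 else 0) := by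
  rw [Blt, Blt, Finset.filter_insert]
  split
  · rw [Finset.card_insert_of_notMem (fun hc => h (Finset.mem_of_mem_filter _ hc))]
  · simp

lemma blt_succ_of_mem {a : ℕ} {E : Finset ℕ} (h : a ∈ E) :
    Blt (a + 1) E = Blt a E + 1 := by
  rw [Blt, Blt]
  rw [show E.filter (fun x => x < a + 1) = insert a (E.filter (fun x => x < a)) by
    ext x
    simp only [Finset.mem_filter, Finset.mem_insert]
    constructor
    · rintro ⟨hx, hlt⟩
      rcases Nat.lt_succ_iff_lt_or_eq.mp hlt with h' | h'
      · exact Or.inr ⟨hx, h'⟩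
      · exact Or.inl h'
    · rintro (rfl | ⟨hx, hlt⟩)
      · exact ⟨h, Nat.lt_succ_self _⟩
      · exact ⟨hx, Nat.lt_succ_of_lt hlt⟩]
  rw [Finset.card_insert_of_notMem (by simp)]

lemma cnt_eq_cnt_succ_add_of_mem {a : ℕ} {E : Finset ℕ} (h : a ∈ E) :
    Cnt a E = Cnt (a + 1) E + 1 := by
  have h1 := cnt_add_blt a E
  have h2 := cnt_add_blt (a + 1) E
  have h3 := blt_succ_of_mem h
  omega

lemma cnt_split {t t' : ℕ} (h : t ≤ t') (E : Finset ℕ) :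
    Cnt t E = (E.filter (fun x => t ≤ x ∧ x < t')).card + Cnt t' E := by
  classical
  rw [Cnt, Cnt]
  rw [← Finset.card_filter_add_card_filter_not (s := E.filter (fun x => t ≤ x))
    (p := fun x => x < t')]
  rw [Finset.filter_filter, Finset.filter_filter]
  congr 1
  apply Finset.card_nbij id
  · intro x hx
    simp only [Finset.coe_filter, Set.mem_setOf_eq, Finset.mem_filter, not_lt, id] at hx ⊢
    exact ⟨hx.1, hx.2.2⟩
  · intro x hx y hy hxy
    exact hxy
  · intro x hx
    simp only [Finset.coe_filter, Set.mem_setOf_eq, not_lt] at hx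
    refine ⟨x, ?_, rfl⟩
    simp only [Finset.coe_filter, Set.mem_setOf_eq, not_lt]
    exact ⟨hx.1, le_trans h hx.2, hx.2⟩

lemma nth_eq_emb {E : Finset ℕ} {k : ℕ} (h1 : 1 ≤ k) (h2 : k ≤ E.card) :
    nth E k = E.orderEmbOfFin rfl ⟨k - 1, by omega⟩ := by
  have hl : k - 1 < (Finset.sort E (· ≤ ·)).length := by
    rw [Finset.length_sort]; omega
  rw [nth, Finset.orderEmbOfFin_apply, List.getD_eq_getElem _ _ hl]
  rfl

lemma nth_mem {E : Finset ℕ} {k : ℕ} (h1 : 1 ≤ k) (h2 : k ≤ E.card) : nth E k ∈ E := by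
  rw [nth_eq_emb h1 h2]
  exact Finset.orderEmbOfFin_mem E rfl _

lemma blt_emb (E : Finset ℕ) (i : Fin E.card) :
    Blt (E.orderEmbOfFin rfl i) E = (i : ℕ) := by
  have hinj : Function.Injective (E.orderEmbOfFin rfl) := (E.orderEmbOfFin rfl).injective
  have himg : E.filter (fun x => x < E.orderEmbOfFin rfl i) =
      (Finset.univ.filter (fun m : Fin E.card => m < i)).image (fun m => E.orderEmbOfFin rfl m) := by
    ext x
    simp only [Finset.mem_filter, Finset.mem_image, Finset.mem_univ, true_and]
    constructor
    · rintro ⟨hxE, hlt⟩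
      have : x ∈ Set.range (E.orderEmbOfFin rfl) := by
        rw [Finset.range_orderEmbOfFin]; exact hxE
      obtain ⟨m, rfl⟩ := this
      exact ⟨m, (E.orderEmbOfFin rfl).strictMono.lt_iff_lt.mp hlt, rfl⟩
    · rintro ⟨m, hm, rfl⟩
      exact ⟨Finset.orderEmbOfFin_mem E rfl m, (E.orderEmbOfFin rfl).strictMono hm⟩
  rw [Blt, himg, Finset.card_image_of_injective _ hinj]
  rw [show Finset.univ.filter (fun m : Fin E.card => m < i) = Finset.Iio i by
    ext m; simp]
  exact Fin.card_Iio i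

lemma blt_nth {E : Finset ℕ} {k : ℕ} (h1 : 1 ≤ k) (h2 : k ≤ E.card) :
    Blt (nth E k) E = k - 1 := by
  rw [nth_eq_emb h1 h2]
  exact blt_emb E _

lemma blt_nth_succ {E : Finset ℕ} {k : ℕ} (h1 : 1 ≤ k) (h2 : k ≤ E.card) :
    Blt (nth E k + 1) E = k := by
  rw [blt_succ_of_mem (nth_mem h1 h2), blt_nth h1 h2]
  omega

lemma nth_lt_of_le_blt {E : Finset ℕ} {k t : ℕ} (h1 : 1 ≤ k) (h2 : k ≤ E.card)
    (h : k ≤ Blt t E) : nth E k < t := by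
  by_contra hc
  push_neg at hc
  have := blt_anti hc E
  rw [blt_nth h1 h2] at this
  omega

lemma le_nth_of_blt_lt {E : Finset ℕ} {k t : ℕ} (h1 : 1 ≤ k) (h2 : k ≤ E.card)
    (h : Blt t E < k) : t ≤ nth E k := by
  by_contra hc
  push_neg at hc
  have h' : nth E k + 1 ≤ t := hc
  have := blt_anti h' E
  rw [blt_nth_succ h1 h2] at this
  omega

lemma nth_lt_nth {E : Finset ℕ} {k k' : ℕ} (h1 : 1 ≤ k) (hkk' : k < k') (h2 : k' ≤ E.card) :
    nth E k < nth E k' := by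
  rw [nth_eq_emb h1 (le_trans (le_of_lt hkk') h2), nth_eq_emb (by omega) h2]
  exact (E.orderEmbOfFin rfl).strictMono (by simp [Fin.lt_def]; omega)

lemma nth_le_nth {E : Finset ℕ} {k k' : ℕ} (h1 : 1 ≤ k) (hkk' : k ≤ k') (h2 : k' ≤ E.card) :
    nth E k ≤ nth E k' := by
  rcases eq_or_lt_of_le hkk' with rfl | h
  · exact le_refl _
  · exact le_of_lt (nth_lt_nth h1 h h2)

lemma exists_nth_eq {E : Finset ℕ} {a : ℕ} (ha : a ∈ E) :
    nth E (Blt a E + 1) = a ∧ Blt a E + 1 ≤ E.card := by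
  have hc : 1 ≤ Cnt a E := by
    rw [Cnt]
    refine Finset.card_pos.mpr ⟨a, ?_⟩
    simp [ha]
  have htot := cnt_add_blt a E
  have hk2 : Blt a E + 1 ≤ E.card := by omega
  have hle : a ≤ nth E (Blt a E + 1) := le_nth_of_blt_lt (by omega) hk2 (by omega)
  have hlt : nth E (Blt a E + 1) < a + 1 := by
    apply nth_lt_of_le_blt (by omega) hk2
    rw [blt_succ_of_mem ha]
  exact ⟨by omega, hk2⟩

lemma nth_le_of_subset {E F : Finset ℕ} {k : ℕ} (h : E ⊆ F) (h1 : 1 ≤ k) (h2 : k ≤ E.card) :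
    nth F k ≤ nth E k := by
  have hcard : E.card ≤ F.card := Finset.card_le_card h
  apply le_nth_of_blt_lt h1 h2
  calc Blt (nth F k) E ≤ Blt (nth F k) F := blt_mono_set h _
    _ = k - 1 := blt_nth h1 (le_trans h2 hcard)
    _ < k := by omega

lemma nth_le_of_cnt_le {E F : Finset ℕ} {k : ℕ} (hcard : E.card = F.card)
    (hd : ∀ t, Cnt t E ≤ Cnt t F) (h1 : 1 ≤ k) (h2 : k ≤ E.card) :
    nth E k ≤ nth F k := by
  apply le_nth_of_blt_lt h1 (by omega)
  have e1 := cnt_add_blt (nth E k) E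
  have e2 := cnt_add_blt (nth E k) F
  have := hd (nth E k)
  have := blt_nth h1 h2
  omega

lemma dom_card_eq {E F : Finset ℕ} (h : Dom E F) : E.card = F.card := by
  have := h.length_eq
  simpa [Finset.length_sort] using this

lemma nth_eq_get {E : Finset ℕ} {i : ℕ} (h : i < E.card) :
    nth E (i + 1) = (E.sort (· ≤ ·)).get ⟨i, by rw [Finset.length_sort]; exact h⟩ := by
  rw [nth, List.get_eq_getElem, List.getD_eq_getElem]
  · simp
  · rw [Finset.length_sort]; omega

lemma dom_iff_cnt {E F : Finset ℕ} (hcard : E.card = F.card) :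
    Dom E F ↔ ∀ t, Cnt t E ≤ Cnt t F := by
  constructor
  · intro h t
    rw [Dom, List.forall₂_iff_get] at h
    obtain ⟨hlen, hget⟩ := h
    by_contra hc
    push_neg at hc
    have h1 : 1 ≤ Cnt t E := by omega
    have htotE := cnt_add_blt t E
    have htotF := cnt_add_blt t F
    set k := Blt t E + 1 with hk
    have hk2 : k ≤ E.card := by omega
    have hEk : t ≤ nth E k := le_nth_of_blt_lt (by omega) hk2 (by omega)
    have hFk : nth F k < t := nth_lt_of_le_blt (by omega) (by omega) (by omega)
    have hEF : nth E k ≤ nth F k := by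
      have h1' : k - 1 < E.card := by omega
      have h2' : k - 1 < F.card := by omega
      have := hget (k - 1) (by rw [Finset.length_sort]; exact h1')
        (by rw [Finset.length_sort]; exact h2')
      rw [show k = (k-1) + 1 by omega, nth_eq_get h1', nth_eq_get h2']
      exact this
    omega
  · intro h
    rw [Dom, List.forall₂_iff_get]
    refine ⟨by simp [Finset.length_sort, hcard], fun i h₁ h₂ => ?_⟩
    rw [Finset.length_sort] at h₁ h₂
    rw [← nth_eq_get h₁, ← nth_eq_get h₂]
    exact nth_le_of_cnt_le hcard h (by omega) (by omega)

def Wset (w : ℕ → ℕ) (j : ℕ) : Finset ℕ := (Finset.Icc 1 j).image w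

lemma wset_zero (w : ℕ → ℕ) : Wset w 0 = ∅ := by simp [Wset]

lemma wset_succ (w : ℕ → ℕ) {j : ℕ} (h : 1 ≤ j) :
    Wset w j = insert (w j) (Wset w (j - 1)) := by
  rw [Wset, Wset, show Finset.Icc 1 j = insert j (Finset.Icc 1 (j-1)) by
    ext x; simp only [Finset.mem_Icc, Finset.mem_insert]; omega, Finset.image_insert]

lemma wset_mono (w : ℕ → ℕ) {j j' : ℕ} (h : j ≤ j') : Wset w j ⊆ Wset w j' :=
  Finset.image_subset_image (Finset.Icc_subset_Icc_right h)

lemma mem_wset {w : ℕ → ℕ} {j x : ℕ} : x ∈ Wset w j ↔ ∃ i, 1 ≤ i ∧ i ≤ j ∧ w i = x := by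
  simp only [Wset, Finset.mem_image, Finset.mem_Icc]
  constructor
  · rintro ⟨i, ⟨h1, h2⟩, h3⟩; exact ⟨i, h1, h2, h3⟩
  · rintro ⟨i, h1, h2, h3⟩; exact ⟨i, ⟨h1, h2⟩, h3⟩

lemma cnt_sdiff {S Y : Finset ℕ} (h : S ⊆ Y) (t : ℕ) :
    Cnt t S + ((Y \ S).filter (fun x => t ≤ x)).card = Cnt t Y := by
  rw [Cnt, Cnt, show Y = S ∪ (Y \ S) from (Finset.union_sdiff_of_subset h).symm,
    Finset.filter_union]
  rw [Finset.card_union_of_disjoint]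
  · congr 2
    rw [Finset.union_sdiff_of_subset h]
  · exact Finset.disjoint_filter_filter Finset.disjoint_sdiff

section Main

variable {n p : ℕ} {w ξ : ℕ → ℕ} {Y : Finset ℕ}

lemma wset_card (hw : Set.InjOn w (Set.Icc 1 n)) {j : ℕ} (hj : j ≤ n) :
    (Wset w j).card = j := by
  rw [Wset, Finset.card_image_of_injOn, Nat.card_Icc]
  · omega
  · intro x hx y hy hxy
    simp only [Finset.coe_Icc, Set.mem_Icc] at hx hy
    exact hw ⟨hx.1, le_trans hx.2 hj⟩ ⟨hy.1, le_trans hy.2 hj⟩ hxy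

lemma wj_not_mem (hw : Set.InjOn w (Set.Icc 1 n)) {j : ℕ} (h1 : 1 ≤ j) (hj : j ≤ n) :
    w j ∉ Wset w (j - 1) := by
  intro hc
  obtain ⟨i, hi1, hi2, hi3⟩ := mem_wset.mp hc
  have : i = j := hw ⟨hi1, by omega⟩ ⟨h1, hj⟩ hi3
  omega

end Main

section MainInv

variable {n p : ℕ} {w ξ : ℕ → ℕ} {Y : Finset ℕ}

lemma main_inv (hw : Set.InjOn w (Set.Icc 1 n)) (hξ : MinLift n p Y w ξ) :
    ∀ j, j ≤ n →
      (Wset ξ j).card = j ∧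
      (j ≤ p → Wset ξ j ⊆ Y) ∧
      (∀ t, Cnt t (Wset w j) ≤ Cnt t (Wset ξ j)) ∧
      (∀ x ∈ Wset ξ j, x ∉ Y →
        x ∈ Wset w j ∧ Cnt (x + 1) (Wset ξ j) ≤ Cnt (x + 1) (Wset w j)) := by
  intro j
  induction j with
  | zero =>
    intro _
    refine ⟨by simp [wset_zero], fun _ => by simp [wset_zero], fun t => by simp [wset_zero],
      fun x hx _ => by simp [wset_zero] at hx⟩
  | succ j ih =>
    intro hjn
    obtain ⟨ihA, ihB, ihC, ihD⟩ := ih (by omega)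
    have hXsucc : Wset ξ (j + 1) = insert (ξ (j + 1)) (Wset ξ j) := wset_succ ξ (by omega)
    have hWsucc : Wset w (j + 1) = insert (w (j + 1)) (Wset w j) := wset_succ w (by omega)
    have hwnot : w (j + 1) ∉ Wset w j := wj_not_mem hw (by omega) hjn
    have hWcard : (Wset w (j + 1)).card = j + 1 := wset_card hw hjn
    have hWjcard : (Wset w j).card = j := wset_card hw (by omega)
    by_cases hcase : j + 1 ≤ p
    · -- greedy case
      have hmin : ((Y \ Wset ξ j).filter (fun y => w (j + 1) ≤ y)).min
          = (ξ (j + 1) : WithTop ℕ) := hξ.1 (j + 1) (by omega) hcase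
      have hmem := Finset.mem_of_min hmin
      simp only [Nat.cast_id, Finset.mem_filter, Finset.mem_sdiff] at hmem
      obtain ⟨⟨hxiY, hxinot⟩, hwxi⟩ := hmem
      have hminle : ∀ y, y ∈ Y → y ∉ Wset ξ j → w (j + 1) ≤ y → ξ (j + 1) ≤ y := by
        intro y h1 h2 h3
        have hmem2 : y ∈ (Y \ Wset ξ j).filter (fun y => w (j + 1) ≤ y) := by
          simp only [Finset.mem_filter, Finset.mem_sdiff]; exact ⟨⟨h1, h2⟩, h3⟩
        have h4 := Finset.min_le hmem2
        rw [hmin] at h4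
        simpa using h4
      refine ⟨?_, ?_, ?_, ?_⟩
      · rw [hXsucc, Finset.card_insert_of_notMem hxinot, ihA]
      · intro _
        rw [hXsucc]
        exact Finset.insert_subset hxiY (ihB (by omega))
      · intro t
        rw [hXsucc, hWsucc, cnt_insert hwnot, cnt_insert hxinot]
        have := ihC t
        split_ifs <;> omega
      · intro x hx hxY
        rw [hXsucc] at hx
        rcases Finset.mem_insert.mp hx with rfl | hxmem
        · exact absurd hxiY hxY
        · exact absurd (ihB (by omega) hxmem) hxY
    · -- subroutine case
      obtain ⟨q, hq1, hqle, hqcond, hrcond, hxieq⟩ := hξ.2 (j + 1) (by omega) hjn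
      have hxieq' : ξ (j + 1) = nth (Wset w (j + 1)) q := hxieq
      have hqcond' : q = 1 ∨ nth (Wset ξ j) (q - 1) < nth (Wset w (j + 1)) q := hqcond
      have hrcond' : ∀ r, q < r → r ≤ j + 1 →
          nth (Wset w (j + 1)) r ≤ nth (Wset ξ j) (r - 1) := hrcond
      clear hqcond hrcond hxieq
      have hblt_qa : q - 1 ≤ Blt (ξ (j + 1)) (Wset ξ j) := by
        by_cases hq1' : q = 1
        · omega
        · rcases hqcond' with h | h
          · omega
          · have h2 : nth (Wset ξ j) (q - 1) + 1 ≤ ξ (j + 1) := by rw [hxieq']; omega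
            have h3 := blt_anti h2 (Wset ξ j)
            rw [blt_nth_succ (by omega) (by rw [ihA]; omega)] at h3
            omega
      have hanot : ξ (j + 1) ∉ Wset ξ j := by
        intro hamem
        obtain ⟨hnk, hkle⟩ := exists_nth_eq hamem
        rw [ihA] at hkle
        have hr := hrcond' (Blt (ξ (j + 1)) (Wset ξ j) + 1 + 1) (by omega) (by omega)
        rw [Nat.add_sub_cancel, hnk] at hr
        have hlt : nth (Wset w (j + 1)) q
            < nth (Wset w (j + 1)) (Blt (ξ (j + 1)) (Wset ξ j) + 1 + 1) :=
          nth_lt_nth hq1 (by omega) (by rw [hWcard]; omega)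
        rw [← hxieq'] at hlt
        omega
      have hq_blt : Blt (ξ (j + 1) + 1) (Wset w (j + 1)) = q := by
        rw [hxieq']
        exact blt_nth_succ hq1 (by rw [hWcard]; omega)
      have hBltXW : ∀ t, Blt t (Wset ξ j) ≤ Blt t (Wset w j) := by
        intro t
        have h1 := ihC t
        have e1 := cnt_add_blt t (Wset w j)
        have e2 := cnt_add_blt t (Wset ξ j)
        rw [hWjcard] at e1
        rw [ihA] at e2
        omega
      refine ⟨?_, fun h => absurd h hcase, ?_, ?_⟩
      · rw [hXsucc, Finset.card_insert_of_notMem hanot, ihA]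
      · -- dominance
        intro t
        rw [hXsucc, cnt_insert hanot]
        by_cases ht : t ≤ ξ (j + 1)
        · rw [if_pos ht]
          have h1 := hBltXW t
          have h2 : Blt t (Wset w j) ≤ Blt t (Wset w (j + 1)) :=
            blt_mono_set (wset_mono w (by omega)) t
          have e1 := cnt_add_blt t (Wset w (j + 1))
          have e2 := cnt_add_blt t (Wset ξ j)
          rw [hWcard] at e1
          rw [ihA] at e2
          omega
        · rw [if_neg ht]
          push_neg at ht
          rcases Nat.eq_zero_or_pos (Cnt t (Wset w (j + 1))) with hz | hc1
          · omega
          have etot := cnt_add_blt t (Wset w (j + 1))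
          rw [hWcard] at etot
          have hqr : q ≤ Blt t (Wset w (j + 1)) := by
            have h3 := blt_anti (show ξ (j + 1) + 1 ≤ t by omega) (Wset w (j + 1))
            rw [hq_blt] at h3
            exact h3
          have ht_le : t ≤ nth (Wset w (j + 1)) (Blt t (Wset w (j + 1)) + 1) :=
            le_nth_of_blt_lt (by omega) (by rw [hWcard]; omega) (by omega)
          have hr2 := hrcond' (Blt t (Wset w (j + 1)) + 1) (by omega) (by omega)
          rw [Nat.add_sub_cancel] at hr2
          have h1 : t ≤ nth (Wset ξ j) (Blt t (Wset w (j + 1))) := le_trans ht_le hr2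
          have h2 := blt_anti h1 (Wset ξ j)
          rw [blt_nth (by omega) (by rw [ihA]; omega)] at h2
          have etot2 := cnt_add_blt t (Wset ξ j)
          rw [ihA] at etot2
          omega
      · -- invariant D
        intro x hx hxY
        rw [hXsucc] at hx
        rcases Finset.mem_insert.mp hx with rfl | hxmem
        · constructor
          · rw [hxieq']
            exact nth_mem hq1 (by rw [hWcard]; omega)
          · rw [hXsucc, cnt_insert hanot, if_neg (by omega)]
            have e1 := cnt_add_blt (ξ (j + 1) + 1) (Wset ξ j)
            rw [ihA] at e1
            have e2 := cnt_add_blt (ξ (j + 1) + 1) (Wset w (j + 1))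
            rw [hWcard] at e2
            have h3 : q - 1 ≤ Blt (ξ (j + 1) + 1) (Wset ξ j) :=
              le_trans hblt_qa (blt_anti (by omega) _)
            omega
        · obtain ⟨hxW, hxcnt⟩ := ihD x hxmem hxY
          refine ⟨wset_mono w (by omega) hxW, ?_⟩
          rw [hXsucc, cnt_insert hanot, hWsucc, cnt_insert hwnot]
          split_ifs with h1 h2
          · omega
          · -- bad branch : x < ξ (j+1), w (j+1) ≤ x
            push_neg at h2
            rcases Nat.lt_or_ge (Cnt (x + 1) (Wset ξ j)) (Cnt (x + 1) (Wset w j)) with hlt | hge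
            · omega
            · have heq : Cnt (x + 1) (Wset ξ j) = Cnt (x + 1) (Wset w j) :=
                le_antisymm hxcnt hge
              exfalso
              have e1 := cnt_add_blt (x + 1) (Wset ξ j)
              rw [ihA] at e1
              have e2 := cnt_add_blt (x + 1) (Wset w j)
              rw [hWjcard] at e2
              have hsW : Blt (x + 1) (Wset w j) = Blt (x + 1) (Wset ξ j) := by omega
              have hs'pos : 1 ≤ Blt (x + 1) (Wset ξ j) := by
                have := blt_succ_of_mem hxmem
                omega
              have hs'le : Blt (x + 1) (Wset ξ j) ≤ j := by omega
              have hWblt : Blt (x + 1) (Wset w (j + 1)) = Blt (x + 1) (Wset ξ j) + 1 := by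
                rw [hWsucc, blt_insert hwnot, if_pos (by omega), hsW]
              have hq_le : q ≤ Blt (x + 1) (Wset ξ j) + 1 := by
                by_contra hqgt
                push_neg at hqgt
                have hgt : nth (Wset ξ j) (q - 1) < nth (Wset w (j + 1)) q := by
                  rcases hqcond' with h | h
                  · omega
                  · exact h
                obtain ⟨u, hu⟩ : ∃ u, nth (Wset w (j + 1)) q = u := ⟨_, rfl⟩
                rw [hu] at hgt
                have hubltW : Blt u (Wset w (j + 1)) = q - 1 := by
                  rw [← hu]; exact blt_nth hq1 (by rw [hWcard]; omega)
                have hublt1 : Blt (u + 1) (Wset w (j + 1)) = q := by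
                  rw [← hu]; exact blt_nth_succ hq1 (by rw [hWcard]; omega)
                have hux : x < u := by
                  by_contra hc
                  push_neg at hc
                  have h4 : Blt (u + 1) (Wset w (j + 1)) ≤ Blt (x + 1) (Wset w (j + 1)) :=
                    blt_anti (by omega) _
                  omega
                have hcntu : Cnt u (Wset w (j + 1))
                    = Cnt u (Wset w j) + if u ≤ w (j + 1) then 1 else 0 := by
                  rw [hWsucc]; exact cnt_insert hwnot u
                rw [if_neg (by omega)] at hcntu
                have h5 := ihC u
                have e3 := cnt_add_blt u (Wset w (j + 1))
                rw [hWcard] at e3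
                have e4 := cnt_add_blt u (Wset ξ j)
                rw [ihA] at e4
                have hbltu : Blt u (Wset ξ j) ≤ q - 2 := by omega
                have h6 : u ≤ nth (Wset ξ j) (q - 1) :=
                  le_nth_of_blt_lt (by omega) (by rw [ihA]; omega) (by omega)
                omega
              have h6 : nth (Wset w (j + 1)) q ≤ nth (Wset w (j + 1)) (Blt (x + 1) (Wset ξ j) + 1) :=
                nth_le_nth hq1 hq_le (by rw [hWcard]; omega)
              have h7 : nth (Wset w (j + 1)) (Blt (x + 1) (Wset ξ j) + 1) < x + 1 :=
                nth_lt_of_le_blt (by omega) (by rw [hWcard]; omega) (by omega)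
              rw [← hxieq'] at h6
              omega
          · omega
          · omega

end MainInv

section MinLemmas

variable {n p : ℕ} {w ξ : ℕ → ℕ} {Y : Finset ℕ}

lemma min_le_p (hw : Set.InjOn w (Set.Icc 1 n)) (hp : p ≤ n) (hξ : MinLift n p Y w ξ) :
    ∀ j, j ≤ p → ∀ Z, Z ⊆ Y → Z.card = j → (∀ t, Cnt t (Wset w j) ≤ Cnt t Z) →
      ∀ t, Cnt t (Wset ξ j) ≤ Cnt t Z := by
  intro j
  induction j with
  | zero => intro _ Z _ _ _ t; simp [wset_zero, Cnt]
  | succ j ih =>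
    intro hjp Z hZY hZc hdZ
    have hjn : j + 1 ≤ n := le_trans hjp hp
    obtain ⟨ihA, ihB, _, _⟩ := main_inv hw hξ j (by omega)
    have hXsucc : Wset ξ (j + 1) = insert (ξ (j + 1)) (Wset ξ j) := wset_succ ξ (by omega)
    have hWsucc : Wset w (j + 1) = insert (w (j + 1)) (Wset w j) := wset_succ w (by omega)
    have hwnot : w (j + 1) ∉ Wset w j := wj_not_mem hw (by omega) hjn
    have hWcard : (Wset w (j + 1)).card = j + 1 := wset_card hw hjn
    have hwmem : w (j + 1) ∈ Wset w (j + 1) := mem_wset.mpr ⟨j + 1, by omega, le_refl _, rfl⟩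
    -- minimality data for step j+1
    have hmin : ((Y \ Wset ξ j).filter (fun y => w (j + 1) ≤ y)).min
        = (ξ (j + 1) : WithTop ℕ) := hξ.1 (j + 1) (by omega) hjp
    have hmem := Finset.mem_of_min hmin
    simp only [Nat.cast_id, Finset.mem_filter, Finset.mem_sdiff] at hmem
    obtain ⟨⟨hxiY, hxinot⟩, hwxi⟩ := hmem
    have hminle : ∀ y, y ∈ Y → y ∉ Wset ξ j → w (j + 1) ≤ y → ξ (j + 1) ≤ y := by
      intro y h1 h2 h3
      have hmem2 : y ∈ (Y \ Wset ξ j).filter (fun y => w (j + 1) ≤ y) := by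
        simp only [Finset.mem_filter, Finset.mem_sdiff]; exact ⟨⟨h1, h2⟩, h3⟩
      have h4 := Finset.min_le hmem2
      rw [hmin] at h4
      simpa using h4
    -- choose z0 : the s-th largest element of Z where s = Cnt (w (j+1)) (Wset w (j+1))
    have hs1 : 1 ≤ Cnt (w (j + 1)) (Wset w (j + 1)) := by
      rw [Cnt]
      refine Finset.card_pos.mpr ⟨w (j + 1), ?_⟩
      simp [hwmem]
    have hsle : Cnt (w (j + 1)) (Wset w (j + 1)) ≤ j + 1 := by
      have := cnt_add_blt (w (j + 1)) (Wset w (j + 1)); rw [hWcard] at this; omega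
    have hsZ : Cnt (w (j + 1)) (Wset w (j + 1)) ≤ Cnt (w (j + 1)) Z := hdZ _
    have hBltwZ := cnt_add_blt (w (j + 1)) Z
    rw [hZc] at hBltwZ
    obtain ⟨z0, hz0⟩ :
        ∃ z0, nth Z (j + 1 - Cnt (w (j + 1)) (Wset w (j + 1)) + 1) = z0 := ⟨_, rfl⟩
    have hz0w : w (j + 1) ≤ z0 := by
      rw [← hz0]
      exact le_nth_of_blt_lt (by omega) (by omega) (by omega)
    have hz0mem : z0 ∈ Z := by rw [← hz0]; exact nth_mem (by omega) (by omega)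
    have hz0blt : Blt z0 Z = j + 1 - Cnt (w (j + 1)) (Wset w (j + 1)) := by
      rw [← hz0]
      have := blt_nth (E := Z) (k := j + 1 - Cnt (w (j + 1)) (Wset w (j + 1)) + 1)
        (by omega) (by omega)
      rw [this]
      omega
    have hz0cnt : Cnt (w (j + 1)) (Wset w (j + 1)) ≤ Cnt z0 Z := by
      have := cnt_add_blt z0 Z; rw [hZc] at this; omega
    -- Z' = Z.erase z0
    have hZ'c : (Z.erase z0).card = j := by rw [Finset.card_erase_of_mem hz0mem, hZc]; omega
    have hZ'sub : Z.erase z0 ⊆ Y := le_trans (Finset.erase_subset _ _) hZY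
    have hZins : Z = insert z0 (Z.erase z0) := (Finset.insert_erase hz0mem).symm
    have hz0not : z0 ∉ Z.erase z0 := Finset.notMem_erase _ _
    have hcntZ : ∀ t, Cnt t Z = Cnt t (Z.erase z0) + if t ≤ z0 then 1 else 0 := by
      intro t
      have h := cnt_insert hz0not t
      rw [← hZins] at h
      exact h
    have hWZ' : ∀ t, Cnt t (Wset w j) ≤ Cnt t (Z.erase z0) := by
      intro t
      have hWt := cnt_insert hwnot t
      rw [← hWsucc] at hWt
      have h9 := hcntZ t
      have h10 := hdZ t
      rcases le_or_gt t (w (j + 1)) with h | h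
      · rw [if_pos h] at hWt
        rw [if_pos (le_trans h hz0w)] at h9
        omega
      · rw [if_neg (by omega)] at hWt
        rcases le_or_gt t z0 with h' | h'
        · rw [if_pos h'] at h9
          -- Cnt t (W (j+1)) + 1 ≤ s
          have hsub : (Wset w (j + 1)).filter (fun x => t ≤ x) ⊆
              ((Wset w (j + 1)).filter (fun x => w (j + 1) ≤ x)).erase (w (j + 1)) := by
            intro y hy
            simp only [Finset.mem_filter, Finset.mem_erase] at hy ⊢
            exact ⟨by omega, hy.1, by omega⟩
          have hcc := Finset.card_le_card hsub
          have hwmem2 : w (j + 1) ∈ (Wset w (j + 1)).filter (fun x => w (j + 1) ≤ x) := by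
            simp only [Finset.mem_filter]
            exact ⟨hwmem, le_refl _⟩
          rw [Finset.card_erase_of_mem hwmem2] at hcc
          have h11 : Cnt t Z ≥ Cnt z0 Z := cnt_anti h' Z
          have h12 : Cnt t (Wset w (j + 1)) + 1 ≤ Cnt (w (j + 1)) (Wset w (j + 1)) := by
            have : Cnt t (Wset w (j + 1)) ≤ Cnt (w (j + 1)) (Wset w (j + 1)) - 1 := hcc
            omega
          omega
        · rw [if_neg (by omega)] at h9
          omega
    have ihZ := ih (by omega) (Z.erase z0) hZ'sub hZ'c hWZ'
    -- glue
    intro t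
    rw [hXsucc, cnt_insert hxinot]
    by_cases hta : t ≤ ξ (j + 1)
    · rw [if_pos hta]
      rcases le_or_gt t (w (j + 1)) with h | h
      · have h9 := hcntZ t
        rw [if_pos (le_trans h hz0w)] at h9
        have := ihZ t
        omega
      · -- w (j+1) < t ≤ ξ (j+1)
        have hXY : Wset ξ j ⊆ Y := ihB (by omega)
        have c1 := cnt_sdiff hXY t
        have c2 := cnt_sdiff hXY (w (j + 1))
        have hEq : (Y \ Wset ξ j).filter (fun x => t ≤ x)
            = (Y \ Wset ξ j).filter (fun x => w (j + 1) ≤ x) := by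
          ext y
          simp only [Finset.mem_filter, Finset.mem_sdiff]
          constructor
          · rintro ⟨hy, hty⟩; exact ⟨hy, by omega⟩
          · rintro ⟨hy, hwy⟩; exact ⟨hy, le_trans hta (hminle y hy.1 hy.2 hwy)⟩
        have c3 := cnt_sdiff hZY t
        have c4 := cnt_sdiff hZY (w (j + 1))
        have c5 : ((Y \ Z).filter (fun x => t ≤ x)).card
            ≤ ((Y \ Z).filter (fun x => w (j + 1) ≤ x)).card := by
          apply Finset.card_le_card
          intro y hy
          simp only [Finset.mem_filter] at hy ⊢
          exact ⟨hy.1, by omega⟩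
        have c6 : Cnt (w (j + 1)) (Wset ξ j) + 1 ≤ Cnt (w (j + 1)) Z := by
          have h13 := ihZ (w (j + 1))
          have h14 := hcntZ (w (j + 1))
          rw [if_pos hz0w] at h14
          omega
        rw [hEq] at c1
        omega
    · rw [if_neg hta]
      have h9 := hcntZ t
      have h10 := ihZ t
      rcases le_or_gt t z0 with h | h
      · rw [if_pos h] at h9; omega
      · rw [if_neg (by omega)] at h9; omega

lemma min_gt_p (hw : Set.InjOn w (Set.Icc 1 n)) (hp : p ≤ n) (hξ : MinLift n p Y w ξ)
    (hYc : Y.card = p) :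
    ∀ j, p ≤ j → j ≤ n → ∀ Z, Y ⊆ Z → (∀ t, Cnt t (Wset w j) ≤ Cnt t Z) →
      ∀ t, Cnt t (Wset ξ j) ≤ Cnt t Z := by
  intro j hpj hjn Z hYZ hdZ t
  obtain ⟨ihA, ihB, ihC, ihD⟩ := main_inv hw hξ j hjn
  by_cases hS : ((Wset ξ j \ Y).filter (fun x => t ≤ x)) = ∅
  · have h1 : (Wset ξ j).filter (fun x => t ≤ x) ⊆ Y.filter (fun x => t ≤ x) := by
      intro y hy
      simp only [Finset.mem_filter] at hy ⊢
      refine ⟨?_, hy.2⟩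
      by_contra hc
      have hmem : y ∈ (Wset ξ j \ Y).filter (fun x => t ≤ x) := by
        simp only [Finset.mem_filter, Finset.mem_sdiff]
        exact ⟨⟨hy.1, hc⟩, hy.2⟩
      rw [hS] at hmem
      simp at hmem
    calc Cnt t (Wset ξ j) ≤ Cnt t Y := Finset.card_le_card h1
      _ ≤ Cnt t Z := cnt_mono_set hYZ t
  · have hne : ((Wset ξ j \ Y).filter (fun x => t ≤ x)).Nonempty :=
      Finset.nonempty_iff_ne_empty.mpr hS
    obtain ⟨t', ht'mem, ht'min⟩ :
        ∃ t' ∈ (Wset ξ j \ Y).filter (fun x => t ≤ x),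
          ∀ x ∈ (Wset ξ j \ Y).filter (fun x => t ≤ x), t' ≤ x :=
      ⟨_, Finset.min'_mem _ hne, fun x hx => Finset.min'_le _ x hx⟩
    simp only [Finset.mem_filter, Finset.mem_sdiff] at ht'mem
    obtain ⟨⟨ht'X, ht'Y⟩, htt'⟩ := ht'mem
    obtain ⟨ht'W, ht'cnt⟩ := ihD t' ht'X ht'Y
    have c1 : Cnt t' (Wset ξ j) = Cnt (t' + 1) (Wset ξ j) + 1 := cnt_eq_cnt_succ_add_of_mem ht'X
    have c2 : Cnt t' (Wset w j) = Cnt (t' + 1) (Wset w j) + 1 := cnt_eq_cnt_succ_add_of_mem ht'W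
    have c3 := hdZ t'
    have s1 := cnt_split htt' (Wset ξ j)
    have s2 := cnt_split htt' Z
    have hmid : (Wset ξ j).filter (fun x => t ≤ x ∧ x < t')
        ⊆ Z.filter (fun x => t ≤ x ∧ x < t') := by
      intro y hy
      simp only [Finset.mem_filter] at hy ⊢
      refine ⟨hYZ ?_, hy.2⟩
      by_contra hc
      have hmem : y ∈ (Wset ξ j \ Y).filter (fun x => t ≤ x) := by
        simp only [Finset.mem_filter, Finset.mem_sdiff]
        exact ⟨⟨hy.1, hc⟩, hy.2.1⟩
      have := ht'min y hmem
      omega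
    have hcc := Finset.card_le_card hmid
    omega

end MinLemmas

theorem stmt19 (n p : ℕ) (hp : p ≤ n) (w ξ : ℕ → ℕ)
    (hw : Set.BijOn w (Set.Icc 1 n) (Set.Icc 1 n))
    (Y : Finset ℕ) (hYs : Y ⊆ Finset.Icc 1 n) (hYc : Y.card = p)
    (hdom : Dom ((Finset.Icc 1 p).image w) Y)
    (hξ : MinLift n p Y w ξ) :
    (Finset.Icc 1 p).image ξ = Y ∧
    Bruhat n w ξ ∧
    (∀ v : ℕ → ℕ, Set.BijOn v (Set.Icc 1 n) (Set.Icc 1 n) →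
      (Finset.Icc 1 p).image v = Y → ¬ Bruhat n ξ v → ¬ Bruhat n w v) ∧
    (∀ v : ℕ → ℕ, Set.BijOn v (Set.Icc 1 n) (Set.Icc 1 n) →
      (Finset.Icc 1 p).image v = Y → Bruhat n w v → Bruhat n ξ v) := by
  have hwi : Set.InjOn w (Set.Icc 1 n) := hw.injOn
  have hXp : Wset ξ p = Y := by
    obtain ⟨hA, hB, _, _⟩ := main_inv hwi hξ p hp
    exact Finset.eq_of_subset_of_card_le (hB le_rfl) (by rw [hA, hYc])
  have key : ∀ v : ℕ → ℕ, Set.BijOn v (Set.Icc 1 n) (Set.Icc 1 n) →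
      (Finset.Icc 1 p).image v = Y → Bruhat n w v → Bruhat n ξ v := by
    intro v hv hvY hbwv i hi
    have hvi : Set.InjOn v (Set.Icc 1 n) := hv.injOn
    have hVcard : (Wset v i).card = i := wset_card hvi hi
    obtain ⟨hXA, _, _, _⟩ := main_inv hwi hξ i hi
    have hWV : ∀ t, Cnt t (Wset w i) ≤ Cnt t (Wset v i) := by
      have h := hbwv i hi
      exact (dom_iff_cnt (by rw [wset_card hwi hi, hVcard])).mp h
    have hvYw : Wset v p = Y := hvY
    have hXV : ∀ t, Cnt t (Wset ξ i) ≤ Cnt t (Wset v i) := by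
      rcases le_or_gt i p with hip | hpi
      · refine min_le_p hwi hp hξ i hip (Wset v i) ?_ hVcard hWV
        rw [← hvYw]
        exact wset_mono v hip
      · refine min_gt_p hwi hp hξ hYc i (by omega) hi (Wset v i) ?_ hWV
        rw [← hvYw]
        exact wset_mono v (by omega)
    show Dom (Wset ξ i) (Wset v i)
    exact (dom_iff_cnt (by rw [hXA, hVcard])).mpr hXV
  refine ⟨hXp, ?_, ?_, key⟩
  · intro i hi
    obtain ⟨hXA, _, hC, _⟩ := main_inv hwi hξ i hi
    show Dom (Wset w i) (Wset ξ i)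
    exact (dom_iff_cnt (by rw [wset_card hwi hi, hXA])).mpr hC
  · intro v hv hvY hnb hbwv
    exact hnb (key v hv hvY hbwv)
end
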